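/- Let M be an N×N Hermitian complex matrix with tr(M) = 0 and eigenvalues μ₁, …, μ_N, and let P be an N×N orthogonal projection matrix (P = Pᴴ and P² = P). Then the real part of tr(M·P) is at most (1/2)·Σ_{i=1}^{N} |μ_i|. -/
import Mathlib

open Matrix

theorem stmt11 {N : ℕ} (M P : Matrix (Fin N) (Fin N) ℂ)
    (hM : M.IsHermitian) (htr : M.trace = 0)
    (hP : Pᴴ = P) (hP2 : P * P = P) :
    ((M * P).trace).re ≤ (1/2) * ∑ i, |hM.eigenvalues i| := by
  set U : Matrix (Fin N) (Fin N) ℂ := (hM.eigenvectorUnitary : Matrix (Fin N) (Fin N) ℂ) with hU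
  set μ : Fin N → ℝ := hM.eigenvalues
  set D : Matrix (Fin N) (Fin N) ℂ := diagonal (Complex.ofReal ∘ μ) with hD
  have hUU : star U * U = 1 := (Matrix.mem_unitaryGroup_iff').mp hM.eigenvectorUnitary.2
  have hUU' : U * star U = 1 := (Matrix.mem_unitaryGroup_iff).mp hM.eigenvectorUnitary.2
  have hspec : M = U * D * star U := hM.spectral_theorem
  set Q : Matrix (Fin N) (Fin N) ℂ := star U * P * U with hQ
  have hQH : Qᴴ = Q := by
    simp [hQ, conjTranspose_mul, hP, mul_assoc, star_eq_conjTranspose]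
  have hQ2 : Q * Q = Q := by
    have h1 : Q * Q = star U * P * (U * star U) * P * U := by
      simp [hQ, mul_assoc]
    rw [h1, hUU', mul_one]
    have h2 : star U * P * P * U = star U * (P * P) * U := by
      simp [mul_assoc]
    rw [h2, hP2]
  have hQsym : ∀ i j, (starRingEnd ℂ) (Q j i) = Q i j := by
    intro i j
    have := congrFun (congrFun hQH i) j
    simpa [conjTranspose_apply] using this
  have diag_nonneg : ∀ (R : Matrix (Fin N) (Fin N) ℂ), Rᴴ = R → R * R = R →
      ∀ i, 0 ≤ (R i i).re := by
    intro R hRH hR2 i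
    have hstep : R i i = ∑ j, (starRingEnd ℂ) (R j i) * R j i := by
      conv_lhs => rw [← hR2]
      rw [Matrix.mul_apply]
      refine Finset.sum_congr rfl fun j _ => ?_
      have := congrFun (congrFun hRH i) j
      rw [← this]
      simp [conjTranspose_apply]
    rw [hstep, Complex.re_sum]
    apply Finset.sum_nonneg
    intro j _
    simp [← Complex.normSq_eq_conj_mul_self, Complex.normSq_nonneg]
  have hQdiag_nonneg : ∀ i, 0 ≤ (Q i i).re := diag_nonneg Q hQH hQ2
  have hQdiag_le : ∀ i, (Q i i).re ≤ 1 := by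
    intro i
    have hRH : (1 - Q)ᴴ = 1 - Q := by simp [hQH]
    have hR2 : (1 - Q) * (1 - Q) = 1 - Q := by
      simp [mul_sub, sub_mul, hQ2]
    have h0 := diag_nonneg (1 - Q) hRH hR2 i
    have hRii : ((1 - Q) i i).re = 1 - (Q i i).re := by
      simp [Matrix.sub_apply, Matrix.one_apply]
    rw [hRii] at h0
    linarith
  have htrace : (M * P).trace = (D * Q).trace := by
    rw [hspec]
    have h1 : U * D * star U * P = U * (D * (star U * P)) := by
      simp [mul_assoc]
    rw [h1, Matrix.trace_mul_comm, hQ]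
    simp [mul_assoc]
  have htrDQ : (D * Q).trace = ∑ i, (μ i : ℂ) * Q i i := by
    rw [Matrix.trace, Finset.sum_congr rfl]
    intro i _
    rw [Matrix.diag_apply, Matrix.mul_apply]
    simp [hD, diagonal_apply]
  have hsum : ∑ i, μ i = 0 := by
    have h1 : M.trace = D.trace := by
      rw [hspec, Matrix.trace_mul_comm, ← mul_assoc, hUU, one_mul]
    have h2 : D.trace = ((∑ i, μ i : ℝ) : ℂ) := by
      simp [hD, Matrix.trace, Matrix.diag_apply, diagonal_apply]
    rw [htr] at h1
    have h3 : ((∑ i, μ i : ℝ) : ℂ) = 0 := (h1.trans h2).symm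
    exact_mod_cast h3
  rw [htrace, htrDQ, Complex.re_sum]
  have hbound : ∀ i, ((μ i : ℂ) * Q i i).re ≤ max (μ i) 0 := by
    intro i
    have hre : ((μ i : ℂ) * Q i i).re = μ i * (Q i i).re := by
      simp [Complex.mul_re]
    rw [hre]
    rcases le_or_gt (μ i) 0 with h | h
    · exact le_trans (mul_nonpos_of_nonpos_of_nonneg h (hQdiag_nonneg i)) (le_max_right _ _)
    · have : μ i * (Q i i).re ≤ μ i := by nlinarith [hQdiag_le i, hQdiag_nonneg i]
      exact le_trans this (le_max_left _ _)
  have key : ∀ i, max (μ i) 0 = (|μ i| + μ i) / 2 := by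
    intro i
    rcases le_or_gt 0 (μ i) with h | h
    · rw [max_eq_left h, abs_of_nonneg h]; ring
    · rw [max_eq_right h.le, abs_of_neg h]; ring
  calc ∑ i, ((μ i : ℂ) * Q i i).re ≤ ∑ i, max (μ i) 0 :=
        Finset.sum_le_sum (fun i _ => hbound i)
    _ = (1/2) * ∑ i, |μ i| := by
        rw [Finset.sum_congr rfl (fun i _ => key i), ← Finset.sum_div,
          Finset.sum_add_distrib, hsum, add_zero]
        ring
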